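/- In a canonical game of 2m rounds (m ≥ 1) on ℂ^n in which the action group B of player 2 contains every n×n permutation matrix and is a proper subgroup of the action group A of player 1 (S_n ≤ B < A ≤ U(n)), player 2 has no strong winning strategy: for every sequence B_1, …, B_m ∈ B there exists a sequence A_1, …, A_m ∈ A such that B_m A_m ⋯ B_1 A_1 e_{q0} ≠ e_{qB}. -/

import Mathlib

/-- The product of the moves in a canonical `2m`-round game, namely
`B_m * A_m * ⋯ * B_1 * A_1`, where player 1 plays `A_1, …, A_m` at odd rounds and
player 2 plays `B_1, …, B_m` at even rounds. -/
noncomputable def canonicalProd {n m : ℕ} (As Bs : Fin m → Matrix (Fin n) (Fin n) ℂ) :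
    Matrix (Fin n) (Fin n) ℂ :=
  ((List.ofFn fun i => Bs i * As i).reverse).prod

/-- The product of the moves in a noncanonical `2m+1`-round game, namely
`A_{m+1} * B_m * A_m * ⋯ * B_1 * A_1`, where player 1 makes the first and the
last move. -/
noncomputable def noncanonicalProd {n m : ℕ} (As : Fin (m + 1) → Matrix (Fin n) (Fin n) ℂ)
    (Bs : Fin m → Matrix (Fin n) (Fin n) ℂ) : Matrix (Fin n) (Fin n) ℂ :=
  As (Fin.last m) * ((List.ofFn fun i : Fin m => Bs i * As i.castSucc).reverse).prod

/-- The underlying matrix of an element of a subgroup of the unitary group. -/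
noncomputable def toMat {n : ℕ} {G : Subgroup (Matrix.unitaryGroup (Fin n) ℂ)} (x : G) :
    Matrix (Fin n) (Fin n) ℂ :=
  ((x : Matrix.unitaryGroup (Fin n) ℂ) : Matrix (Fin n) (Fin n) ℂ)

/-- `G` contains (the standard matrix representation of) the symmetric group `S_n`:
every `n × n` permutation matrix belongs to `G`. -/
def containsSn {n : ℕ} (G : Subgroup (Matrix.unitaryGroup (Fin n) ℂ)) : Prop :=
  ∀ σ : Equiv.Perm (Fin n), ∃ P ∈ G,
    ((P : Matrix.unitaryGroup (Fin n) ℂ) : Matrix (Fin n) (Fin n) ℂ) = σ.permMatrix ℂ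

lemma aux_prod {n k : ℕ} (f : Fin (k+1) → Matrix (Fin n) (Fin n) ℂ)
    (h : ∀ i : Fin k, f i.castSucc = 1) :
    ((List.ofFn f).reverse).prod = f (Fin.last k) := by
  rw [List.ofFn_succ', List.concat_eq_append, List.reverse_append, List.reverse_singleton,
    List.singleton_append, List.prod_cons, List.prod_eq_one, mul_one]
  intro x hx
  rw [List.mem_reverse, List.mem_ofFn] at hx
  obtain ⟨i, rfl⟩ := hx
  exact h i

/-- In a canonical game of `2m` rounds where the action group `B` of player 2 contains
every permutation matrix and is a proper subgroup of the action group `A` of player 1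
(`S_n ≤ B < A ≤ U(n)`), player 2 has no strong winning strategy. -/
theorem canonical_B_lt_A_no_sws_player2
    (n m : ℕ) (hn : 2 ≤ n) (hm : 1 ≤ m)
    (A B : Subgroup (Matrix.unitaryGroup (Fin n) ℂ)) (hBA : B < A) (hSn : containsSn B)
    (q0 qA qB : Fin n) (hq : qA ≠ qB)
    (Bs : Fin m → B) :
    ∃ As : Fin m → A,
      (canonicalProd (fun i => toMat (As i)) (fun i => toMat (Bs i))).mulVec
        (Pi.single q0 1) ≠ Pi.single qB 1 := by
  obtain ⟨k, rfl⟩ : ∃ k, m = k + 1 := ⟨m - 1, (Nat.succ_pred_eq_of_pos hm).symm⟩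
  haveI : Nontrivial (Fin n) := Fin.nontrivial_iff_two_le.mpr hn
  obtain ⟨σ, hσ⟩ : ∃ σ : Equiv.Perm (Fin n), σ⁻¹ q0 ≠ qB := by
    by_cases h : q0 = qB
    · obtain ⟨q1, hq1⟩ := exists_ne q0
      refine ⟨Equiv.swap q0 q1, ?_⟩
      rw [Equiv.swap_inv, Equiv.swap_apply_left, ← h]
      exact hq1
    · exact ⟨1, by simpa using h⟩
  obtain ⟨P, hPB, hPmat⟩ := hSn σ
  set C : A := ⟨(P : Matrix.unitaryGroup (Fin n) ℂ), hBA.le hPB⟩ with hCdef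
  set bInv : Fin (k+1) → A := fun i =>
    ⟨((Bs i : Matrix.unitaryGroup (Fin n) ℂ))⁻¹, hBA.le (B.inv_mem (Bs i).2)⟩ with hbInv
  refine ⟨fun i => if i = Fin.last k then bInv i * C else bInv i, ?_⟩
  have hBbInv : ∀ i, toMat (Bs i) * toMat (bInv i) = 1 := by
    intro i
    have : ((Bs i : Matrix.unitaryGroup (Fin n) ℂ) *
        (Bs i : Matrix.unitaryGroup (Fin n) ℂ)⁻¹ : Matrix.unitaryGroup (Fin n) ℂ)
        = 1 := mul_inv_cancel _
    calc toMat (Bs i) * toMat (bInv i)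
        = (((Bs i : Matrix.unitaryGroup (Fin n) ℂ) *
            (Bs i : Matrix.unitaryGroup (Fin n) ℂ)⁻¹ : Matrix.unitaryGroup (Fin n) ℂ) :
            Matrix (Fin n) (Fin n) ℂ) := rfl
      _ = 1 := by rw [this]; rfl
  have hprod : canonicalProd
      (fun i => toMat (if i = Fin.last k then bInv i * C else bInv i))
      (fun i => toMat (Bs i)) = σ.permMatrix ℂ := by
    rw [canonicalProd, aux_prod]
    · rw [if_pos rfl]
      have : toMat (bInv (Fin.last k) * C) = toMat (bInv (Fin.last k)) * toMat C := rfl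
      rw [this, ← mul_assoc, hBbInv, one_mul]
      exact hPmat
    · intro i
      have hne : i.castSucc ≠ Fin.last k := Fin.ne_last_of_lt (Fin.castSucc_lt_last i)
      simp only [if_neg hne]
      exact hBbInv i.castSucc
  rw [hprod]
  intro hcontra
  have := congrFun hcontra (σ⁻¹ q0)
  simp only [Matrix.mulVec_single, mul_one, Pi.smul_apply, MulOpposite.op_one, one_smul,
    Matrix.col_apply] at this
  rw [Equiv.Perm.permMatrix, PEquiv.toMatrix_apply, Equiv.toPEquiv_apply] at this
  rw [Pi.single_apply, if_neg hσ] at this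
  simp only [Option.mem_def, Equiv.Perm.inv_def, Equiv.apply_symm_apply, if_pos rfl] at this
  exact one_ne_zero this
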